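/- For all 2 ≤ i,k ≤ l and m1,n1,m2,n2 ∈ Z, [e_{1i}(m1,n1), e_{ik}(m2,n2)] = q^{n1 m2} e_{1k}(m1+m2, n1+n2), where e_{ik}(m,n) = Σ_{(m',n')} q^{m' n} x_i(m+m', n+n') ∂/∂x_k(m',n'). -/
import Mathlib


open MvPolynomial

/-- Index set `{2, …, l}` for the variables. -/
abbrev Idx (l : ℕ) := {i : ℕ // 2 ≤ i ∧ i ≤ l}

/-- The polynomial ring `V = ℂ[x_i(m,n) : 2 ≤ i ≤ l, (m,n) ∈ ℤ²]`. -/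
abbrev V (l : ℕ) := MvPolynomial (Idx l × ℤ × ℤ) ℂ

/-- `e_{ij}(m1,n1) = Σ_{(m,n)} q^{m n1} x_i(m1+m, n1+n) ∂/∂x_j(m,n)`, for `2 ≤ i,j ≤ l`. -/
noncomputable def eGen (l : ℕ) (q : ℂ) (i j : Idx l) (m1 n1 : ℤ) (p : V l) : V l :=
  ∑ᶠ mn : ℤ × ℤ,
    q ^ (mn.1 * n1) • (X (i, m1 + mn.1, n1 + mn.2) * pderiv (j, mn.1, mn.2) p)

/-- `e_{i1}(m,n)` = multiplication by the variable `x_i(m,n)`. -/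
noncomputable def eLow (l : ℕ) (i : Idx l) (m n : ℤ) (p : V l) : V l :=
  X (i, m, n) * p

/-- `e_{11}(m1,n1) = μ δ_{(m1,n1),(0,0)} − Σ_{j=2}^l Σ_{(m,n)} q^{n m1} x_j(m1+m, n1+n) ∂/∂x_j(m,n)`. -/
noncomputable def e11 (l : ℕ) (q μ : ℂ) (m1 n1 : ℤ) (p : V l) : V l :=
  (if (m1, n1) = ((0 : ℤ), (0 : ℤ)) then μ else 0) • p
  - ∑ᶠ j : Idx l, ∑ᶠ mn : ℤ × ℤ,
      q ^ (mn.2 * m1) • (X (j, m1 + mn.1, n1 + mn.2) * pderiv (j, mn.1, mn.2) p)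

/-- `e_{1i}(m1,n1) = q^{−m1 n1} μ ∂/∂x_i(−m1,−n1)
  − Σ_{j=2}^l Σ_{(m,n),(m',n')} q^{n1 m' + n m1 + n m'}
      x_j(m1+m+m', n1+n+n') ∂/∂x_j(m,n) ∂/∂x_i(m',n')`, for `2 ≤ i ≤ l`. -/
noncomputable def eUp (l : ℕ) (q μ : ℂ) (i : Idx l) (m1 n1 : ℤ) (p : V l) : V l :=
  q ^ (-(m1 * n1)) • μ • pderiv (i, -m1, -n1) p
  - ∑ᶠ j : Idx l, ∑ᶠ mm : (ℤ × ℤ) × (ℤ × ℤ),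
      q ^ (n1 * mm.2.1 + mm.1.2 * m1 + mm.1.2 * mm.2.1) •
        (X (j, m1 + mm.1.1 + mm.2.1, n1 + mm.1.2 + mm.2.2) *
          pderiv (j, mm.1.1, mm.1.2) (pderiv (i, mm.2.1, mm.2.2) p))

/-- Degree operator `D1 = Σ_{i=2}^l Σ_{(m,n)} m · x_i(m,n) ∂/∂x_i(m,n)`. -/
noncomputable def D1 (l : ℕ) (p : V l) : V l :=
  ∑ᶠ i : Idx l, ∑ᶠ mn : ℤ × ℤ,
    (mn.1 : ℂ) • (X (i, mn.1, mn.2) * pderiv (i, mn.1, mn.2) p)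

/-- Degree operator `D2 = Σ_{i=2}^l Σ_{(m,n)} n · x_i(m,n) ∂/∂x_i(m,n)`. -/
noncomputable def D2 (l : ℕ) (p : V l) : V l :=
  ∑ᶠ i : Idx l, ∑ᶠ mn : ℤ × ℤ,
    (mn.2 : ℂ) • (X (i, mn.1, mn.2) * pderiv (i, mn.1, mn.2) p)

/-- Commutator `[A,B] = A∘B − B∘A` of operators on `V`. -/
noncomputable def oComm {l : ℕ} (A B : V l → V l) : V l → V l := fun p => A (B p) - B (A p)

instance (l : ℕ) : Fintype (Idx l) :=
  Fintype.subtype ((Finset.range (l+1)).filter (fun i => 2 ≤ i ∧ i ≤ l))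
    (by intro x; simp [Nat.lt_succ_iff])

theorem pderiv_comm' {σ R : Type*} [CommRing R] (u v : σ) (p : MvPolynomial σ R) :
    pderiv u (pderiv v p) = pderiv v (pderiv u p) := by
  classical
  induction p using MvPolynomial.induction_on with
  | C a => simp
  | add p r hp hr => simp [hp, hr]
  | mul_X p s hp =>
      have h0 : ∀ w w' : σ, pderiv w (pderiv w' (X s : MvPolynomial σ R)) = 0 := by
        intro w w'
        rcases eq_or_ne s w' with rfl | h
        · simp
        · simp [h]
      simp only [pderiv_mul, map_add, hp, h0]
      ring

theorem pd_X_mul {l : ℕ} (v w : Idx l × ℤ × ℤ) (r : V l) :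
    pderiv v (X w * r) = (if w = v then r else 0) + X w * pderiv v r := by
  classical
  rw [pderiv_mul, pderiv_X, Pi.single_apply]
  rcases eq_or_ne w v with rfl | h
  · simp
  · simp [h]

theorem qq_smul {l : ℕ} {q : ℂ} (hq : q ≠ 0) (a b : ℤ) (x : V l) :
    q ^ a • q ^ b • x = q ^ (a + b) • x := by
  rw [smul_smul, ← zpow_add₀ hq]

theorem eGen_eq (l : ℕ) (q : ℂ) (i j : Idx l) (m n : ℤ) (p : V l) (S : Finset (ℤ × ℤ))
    (hS : ∀ c : ℤ × ℤ, c ∉ S → pderiv ((j, c.1, c.2) : Idx l × ℤ × ℤ) p = 0) :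
    eGen l q i j m n p =
      ∑ c ∈ S, q ^ (c.1 * n) • (X (i, m + c.1, n + c.2) * pderiv (j, c.1, c.2) p) := by
  rw [eGen]
  apply finsum_eq_finset_sum_of_support_subset
  intro c hc
  by_contra h
  apply hc
  simp only [Function.mem_support, ne_eq, not_not] at *
  rw [hS c h]
  simp

theorem eUp_eq (l : ℕ) (q μ : ℂ) (i : Idx l) (m n : ℤ) (p : V l) (S₁ S₂ : Finset (ℤ × ℤ))
    (h₁ : ∀ c : ℤ × ℤ, c ∉ S₁ → ∀ j : Idx l, pderiv ((j, c.1, c.2) : Idx l × ℤ × ℤ) p = 0)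
    (h₂ : ∀ c : ℤ × ℤ, c ∉ S₂ → ∀ j : Idx l, pderiv ((j, c.1, c.2) : Idx l × ℤ × ℤ) p = 0) :
    eUp l q μ i m n p =
      q ^ (-(m * n)) • μ • pderiv (i, -m, -n) p
      - ∑ j : Idx l, ∑ ab ∈ S₁ ×ˢ S₂,
          q ^ (n * ab.2.1 + ab.1.2 * m + ab.1.2 * ab.2.1) •
            (X (j, m + ab.1.1 + ab.2.1, n + ab.1.2 + ab.2.2) *
              pderiv (j, ab.1.1, ab.1.2) (pderiv (i, ab.2.1, ab.2.2) p)) := by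
  rw [eUp, finsum_eq_sum_of_fintype]
  congr 1
  apply Finset.sum_congr rfl
  intro j _
  apply finsum_eq_finset_sum_of_support_subset
  intro ab hab
  by_contra h
  apply hab
  simp only [Function.mem_support, ne_eq, not_not] at *
  rw [Finset.mem_coe, Finset.mem_product] at h
  push_neg at h
  by_cases hb : ab.2 ∈ S₂
  · rw [pderiv_comm', h₁ ab.1 (fun h1 => h h1 hb) j, map_zero, mul_zero, smul_zero]
  · rw [h₂ ab.2 hb i, map_zero, mul_zero, smul_zero]


theorem ite_pair {l : ℕ} (i0 j0 : Idx l) (v a : ℤ × ℤ) (D : V l) :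
    (if ((i0, v.1, v.2) : Idx l × ℤ × ℤ) = (j0, a.1, a.2) then D else 0)
      = if j0 = i0 then (if a = v then D else 0) else 0 := by
  rcases eq_or_ne j0 i0 with rfl | h1
  · rw [if_pos rfl]
    rcases eq_or_ne a v with rfl | h2
    · rw [if_pos rfl, if_pos rfl]
    · rw [if_neg h2, if_neg]
      intro h
      rw [Prod.mk.injEq, Prod.mk.injEq] at h
      exact h2 (Prod.ext h.2.1.symm h.2.2.symm)
  · rw [if_neg h1, if_neg]
    intro h
    exact h1 (congrArg Prod.fst h).symm

theorem ite_pair2 {l : ℕ} (i0 : Idx l) (v b : ℤ × ℤ) (D : V l) :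
    (if ((i0, v.1, v.2) : Idx l × ℤ × ℤ) = (i0, b.1, b.2) then D else 0)
      = if b = v then D else 0 := by
  rw [ite_pair, if_pos rfl]

theorem pd_ite {l : ℕ} (v : Idx l × ℤ × ℤ) (P : Prop) [Decidable P] (D : V l) :
    pderiv v (if P then D else 0) = if P then pderiv v D else 0 := by
  split <;> simp

theorem smul_ite0 {l : ℕ} (a : ℂ) (P : Prop) [Decidable P] (D : V l) :
    a • (if P then D else 0) = if P then a • D else 0 := by
  split <;> simp

theorem mul_ite0 {l : ℕ} (x : V l) (P : Prop) [Decidable P] (D : V l) :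
    x * (if P then D else 0) = if P then x * D else 0 := by
  split <;> simp


theorem pair3_eq_iff {l : ℕ} (i0 j0 : Idx l) (x y u v : ℤ) :
    ((i0, x, y) : Idx l × ℤ × ℤ) = (j0, u, v) ↔ (j0 = i0 ∧ x = u ∧ y = v) := by
  rw [Prod.mk.injEq, Prod.mk.injEq]
  constructor
  · rintro ⟨h1, h2, h3⟩; exact ⟨h1.symm, h2, h3⟩
  · rintro ⟨h1, h2, h3⟩; exact ⟨h1.symm, h2, h3⟩

theorem pair_eq_iff (c : ℤ × ℤ) (u v : ℤ) : c = (u, v) ↔ (c.1 = u ∧ c.2 = v) := by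
  constructor
  · rintro rfl; exact ⟨rfl, rfl⟩
  · rintro ⟨h1, h2⟩; exact Prod.ext h1 h2

set_option maxHeartbeats 3200000 in
theorem stmt9 (l : ℕ) (hl : 2 ≤ l) (q μ : ℂ) (hq : q ≠ 0)
    (i k : Idx l) (m1 n1 m2 n2 : ℤ) :
    oComm (eUp l q μ i m1 n1) (eGen l q i k m2 n2) = fun p =>
      q ^ (n1 * m2) • eUp l q μ k (m1 + m2) (n1 + n2) p := by
  funext p
  classical
  set T0 : Finset (ℤ × ℤ) := p.vars.image (fun v => v.2) with hT0
  have hz : ∀ c : ℤ × ℤ, c ∉ T0 → ∀ j : Idx l, pderiv ((j, c.1, c.2) : Idx l × ℤ × ℤ) p = 0 := by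
    intro c hc j
    apply pderiv_eq_zero_of_notMem_vars
    intro hm
    exact hc (by rw [hT0]; exact Finset.mem_image_of_mem _ hm)
  set T1 : Finset (ℤ × ℤ) := T0 ∪ T0.image (fun c => (m2 + c.1, n2 + c.2)) with hT1
  have hT01 : T0 ⊆ T1 := Finset.subset_union_left
  have hmem1 : ∀ c ∈ T0, ((m2 + c.1, n2 + c.2) : ℤ × ℤ) ∈ T1 := by
    intro c hc
    exact hT1 ▸ Finset.mem_union_right _ (Finset.mem_image_of_mem _ hc)
  set T2 : Finset (ℤ × ℤ) :=
    T0 ∪ (T1 ×ˢ T1).image (fun ab => (m1 + ab.1.1 + ab.2.1, n1 + ab.1.2 + ab.2.2)) with hT2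
  have hT02 : T0 ⊆ T2 := Finset.subset_union_left
  have hmem2 : ∀ a b : ℤ × ℤ, a ∈ T1 → b ∈ T1 →
      ((m1 + a.1 + b.1, n1 + a.2 + b.2) : ℤ × ℤ) ∈ T2 := by
    intro a b ha hb
    rw [hT2]
    apply Finset.mem_union_right
    exact Finset.mem_image.2 ⟨(a, b), Finset.mem_product.2 ⟨ha, hb⟩, rfl⟩
  have hz1 : ∀ c : ℤ × ℤ, c ∉ T1 → ∀ j : Idx l,
      pderiv ((j, c.1, c.2) : Idx l × ℤ × ℤ) p = 0 := fun c hc => hz c (fun h => hc (hT01 h))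
  have hB : eGen l q i k m2 n2 p =
      ∑ c ∈ T0, q ^ (c.1 * n2) • (X (i, m2 + c.1, n2 + c.2) * pderiv (k, c.1, c.2) p) :=
    eGen_eq l q i k m2 n2 p T0 (fun c hc => hz c hc k)
  have hU : eUp l q μ i m1 n1 p =
      q ^ (-(m1 * n1)) • μ • pderiv (i, -m1, -n1) p
      - ∑ j : Idx l, ∑ ab ∈ T0 ×ˢ T0, q ^ (n1 * ab.2.1 + ab.1.2 * m1 + ab.1.2 * ab.2.1) •
          (X (j, m1 + ab.1.1 + ab.2.1, n1 + ab.1.2 + ab.2.2) * pderiv (j, ab.1.1, ab.1.2) (pderiv (i, ab.2.1, ab.2.2) p)) :=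
    eUp_eq l q μ i m1 n1 p T0 T0 hz hz
  have hzB : ∀ c : ℤ × ℤ, c ∉ T1 → ∀ j : Idx l,
      pderiv ((j, c.1, c.2) : Idx l × ℤ × ℤ)
        (∑ c ∈ T0, q ^ (c.1 * n2) • (X (i, m2 + c.1, n2 + c.2) * pderiv (k, c.1, c.2) p)) = 0 := by
    intro c hc j
    rw [map_sum]
    apply Finset.sum_eq_zero
    intro c' hc'
    rw [Derivation.map_smul, pd_X_mul]
    have h1 : ¬(((i, m2 + c'.1, n2 + c'.2) : Idx l × ℤ × ℤ) = (j, c.1, c.2)) := by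
      intro h
      rw [Prod.mk.injEq, Prod.mk.injEq] at h
      exact hc (by
        have : c = ((m2 + c'.1, n2 + c'.2) : ℤ × ℤ) := Prod.ext h.2.1.symm h.2.2.symm
        rw [this]; exact hmem1 c' hc')
    rw [if_neg h1, pderiv_comm', hz c (fun h => hc (hT01 h)) j, map_zero, zero_add, mul_zero,
      smul_zero]
  have hzU : ∀ c : ℤ × ℤ, c ∉ T2 → ∀ j0 : Idx l,
      pderiv ((j0, c.1, c.2) : Idx l × ℤ × ℤ)
        (q ^ (-(m1 * n1)) • μ • pderiv (i, -m1, -n1) p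
         - ∑ j : Idx l, ∑ ab ∈ T0 ×ˢ T0, q ^ (n1 * ab.2.1 + ab.1.2 * m1 + ab.1.2 * ab.2.1) •
            (X (j, m1 + ab.1.1 + ab.2.1, n1 + ab.1.2 + ab.2.2) * pderiv (j, ab.1.1, ab.1.2) (pderiv (i, ab.2.1, ab.2.2) p))) = 0 := by
    intro c hc j0
    have hc0 : c ∉ T0 := fun h => hc (hT02 h)
    rw [map_sub, Derivation.map_smul, Derivation.map_smul,
      pderiv_comm' _ ((i, -m1, -n1) : Idx l × ℤ × ℤ), hz c hc0 j0, map_zero, smul_zero,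
      smul_zero, map_sum]
    rw [Finset.sum_eq_zero, sub_zero]
    intro j _
    rw [map_sum]
    apply Finset.sum_eq_zero
    intro ab hab
    rw [Derivation.map_smul, pd_X_mul]
    have h1 : ¬(((j, m1 + ab.1.1 + ab.2.1, n1 + ab.1.2 + ab.2.2) : Idx l × ℤ × ℤ)
        = (j0, c.1, c.2)) := by
      intro h
      rw [Prod.mk.injEq, Prod.mk.injEq] at h
      refine hc ?_
      have : c = ((m1 + ab.1.1 + ab.2.1, n1 + ab.1.2 + ab.2.2) : ℤ × ℤ) :=
        Prod.ext h.2.1.symm h.2.2.symm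
      rw [this]
      rw [Finset.mem_product] at hab
      exact hmem2 ab.1 ab.2 (hT01 hab.1) (hT01 hab.2)
    rw [if_neg h1, pderiv_comm' _ ((j, ab.1.1, ab.1.2) : Idx l × ℤ × ℤ),
      pderiv_comm' _ ((i, ab.2.1, ab.2.2) : Idx l × ℤ × ℤ), hz c hc0 j0, map_zero, map_zero,
      zero_add, mul_zero, smul_zero]
  have hAB : eUp l q μ i m1 n1
      (∑ c ∈ T0, q ^ (c.1 * n2) • (X (i, m2 + c.1, n2 + c.2) * pderiv (k, c.1, c.2) p)) =
      q ^ (-(m1 * n1)) • μ • pderiv (i, -m1, -n1)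
        (∑ c ∈ T0, q ^ (c.1 * n2) • (X (i, m2 + c.1, n2 + c.2) * pderiv (k, c.1, c.2) p))
      - ∑ j : Idx l, ∑ ab ∈ T1 ×ˢ T1, q ^ (n1 * ab.2.1 + ab.1.2 * m1 + ab.1.2 * ab.2.1) •
          (X (j, m1 + ab.1.1 + ab.2.1, n1 + ab.1.2 + ab.2.2) * pderiv (j, ab.1.1, ab.1.2) (pderiv (i, ab.2.1, ab.2.2)
            (∑ c ∈ T0, q ^ (c.1 * n2) • (X (i, m2 + c.1, n2 + c.2) * pderiv (k, c.1, c.2) p)))) :=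
    eUp_eq l q μ i m1 n1 _ T1 T1 hzB hzB
  have hBA : eGen l q i k m2 n2
      (q ^ (-(m1 * n1)) • μ • pderiv (i, -m1, -n1) p
       - ∑ j : Idx l, ∑ ab ∈ T0 ×ˢ T0, q ^ (n1 * ab.2.1 + ab.1.2 * m1 + ab.1.2 * ab.2.1) •
          (X (j, m1 + ab.1.1 + ab.2.1, n1 + ab.1.2 + ab.2.2) * pderiv (j, ab.1.1, ab.1.2) (pderiv (i, ab.2.1, ab.2.2) p))) =
      ∑ c ∈ T2, q ^ (c.1 * n2) • (X (i, m2 + c.1, n2 + c.2) * pderiv (k, c.1, c.2)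
        (q ^ (-(m1 * n1)) • μ • pderiv (i, -m1, -n1) p
         - ∑ j : Idx l, ∑ ab ∈ T0 ×ˢ T0, q ^ (n1 * ab.2.1 + ab.1.2 * m1 + ab.1.2 * ab.2.1) •
            (X (j, m1 + ab.1.1 + ab.2.1, n1 + ab.1.2 + ab.2.2) * pderiv (j, ab.1.1, ab.1.2) (pderiv (i, ab.2.1, ab.2.2) p)))) :=
    eGen_eq l q i k m2 n2 _ T2 (fun c hc => hzU c hc k)
  have hMA : q ^ (-(m1 * n1)) • μ • pderiv (i, -m1, -n1) (∑ c ∈ T0, q ^ (c.1 * n2) • (X (i, m2 + c.1, n2 + c.2) * pderiv (k, c.1, c.2) p))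
      = (q ^ (-(m1 * n1) + (-m1 - m2) * n2) * μ) • pderiv (k, -m1 - m2, -n1 - n2) p
        + ∑ c ∈ T0, (q ^ (-(m1 * n1)) * μ * q ^ (c.1 * n2)) •
            (X (i, m2 + c.1, n2 + c.2) * pderiv (i, -m1, -n1) (pderiv (k, c.1, c.2) p)) := by
    have hpt : ∀ c ∈ T0, pderiv ((i, -m1, -n1) : Idx l × ℤ × ℤ)
        (q ^ (c.1 * n2) • (X (i, m2 + c.1, n2 + c.2) * pderiv (k, c.1, c.2) p))
        = (if c = ((-m1 - m2, -n1 - n2) : ℤ × ℤ) then q ^ (c.1 * n2) • pderiv (k, c.1, c.2) p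
            else 0)
          + q ^ (c.1 * n2) •
              (X (i, m2 + c.1, n2 + c.2) * pderiv (i, -m1, -n1) (pderiv (k, c.1, c.2) p)) := by
      intro c _
      rw [Derivation.map_smul, pd_X_mul, smul_add]
      congr 1
      rw [smul_ite0]
      apply if_congr _ rfl rfl
      rw [pair3_eq_iff, pair_eq_iff]
      constructor
      · rintro ⟨-, h1, h2⟩; exact ⟨by omega, by omega⟩
      · rintro ⟨h1, h2⟩; exact ⟨rfl, by omega, by omega⟩
    rw [map_sum, Finset.sum_congr rfl hpt, Finset.sum_add_distrib]
    have hco : (∑ c ∈ T0, if c = ((-m1 - m2, -n1 - n2) : ℤ × ℤ)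
        then q ^ (c.1 * n2) • pderiv (k, c.1, c.2) p else 0)
        = q ^ ((-m1 - m2) * n2) • pderiv (k, -m1 - m2, -n1 - n2) p := by
      rw [Finset.sum_eq_single ((-m1 - m2, -n1 - n2) : ℤ × ℤ) (fun b _ hb => if_neg hb)
        (fun hb => by rw [if_pos rfl, hz _ hb k, smul_zero]), if_pos rfl]
    rw [hco, smul_add, smul_add]
    congr 1
    · rw [smul_smul, smul_smul]
      congr 1
      rw [zpow_add₀ hq]
      ring
    · rw [Finset.smul_sum, Finset.smul_sum]
      refine Finset.sum_congr rfl fun c _ => ?_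
      rw [smul_smul, smul_smul]
  have hder : ∀ (j : Idx l) (a b : ℤ × ℤ),
      pderiv ((j, a.1, a.2) : Idx l × ℤ × ℤ) (pderiv ((i, b.1, b.2) : Idx l × ℤ × ℤ) (∑ c ∈ T0, q ^ (c.1 * n2) • (X (i, m2 + c.1, n2 + c.2) * pderiv (k, c.1, c.2) p)))
      = (∑ c ∈ T0, if b = ((m2 + c.1, n2 + c.2) : ℤ × ℤ)
            then q ^ (c.1 * n2) • pderiv (j, a.1, a.2) (pderiv (k, c.1, c.2) p) else 0)
        + ((∑ c ∈ T0, if j = i then (if a = ((m2 + c.1, n2 + c.2) : ℤ × ℤ)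
            then q ^ (c.1 * n2) • pderiv (i, b.1, b.2) (pderiv (k, c.1, c.2) p) else 0) else 0)
        + ∑ c ∈ T0, q ^ (c.1 * n2) • (X (i, m2 + c.1, n2 + c.2) *
            pderiv (j, a.1, a.2) (pderiv (i, b.1, b.2) (pderiv (k, c.1, c.2) p)))) := by
    intro j a b
    rw [map_sum, map_sum, ← Finset.sum_add_distrib, ← Finset.sum_add_distrib]
    refine Finset.sum_congr rfl fun c hc => ?_
    rw [Derivation.map_smul, pd_X_mul, Derivation.map_smul, map_add, pd_ite, pd_X_mul]
    have e1 : (if ((i, m2 + c.1, n2 + c.2) : Idx l × ℤ × ℤ) = (i, b.1, b.2)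
        then pderiv ((j, a.1, a.2) : Idx l × ℤ × ℤ) (pderiv (k, c.1, c.2) p) else 0)
        = if b = ((m2 + c.1, n2 + c.2) : ℤ × ℤ)
            then pderiv ((j, a.1, a.2) : Idx l × ℤ × ℤ) (pderiv (k, c.1, c.2) p) else 0 :=
      ite_pair2 i (m2 + c.1, n2 + c.2) b _
    have e2 : (if ((i, m2 + c.1, n2 + c.2) : Idx l × ℤ × ℤ) = (j, a.1, a.2)
        then pderiv ((i, b.1, b.2) : Idx l × ℤ × ℤ) (pderiv (k, c.1, c.2) p) else 0)
        = if j = i then (if a = ((m2 + c.1, n2 + c.2) : ℤ × ℤ)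
            then pderiv ((i, b.1, b.2) : Idx l × ℤ × ℤ) (pderiv (k, c.1, c.2) p) else 0)
          else 0 :=
      ite_pair i j (m2 + c.1, n2 + c.2) a _
    rw [e1, e2, smul_add, smul_add, smul_ite0, smul_ite0, smul_ite0]
  have hSA : (∑ j : Idx l, ∑ ab ∈ T1 ×ˢ T1, q ^ (n1 * ab.2.1 + ab.1.2 * m1 + ab.1.2 * ab.2.1) •
        (X (j, m1 + ab.1.1 + ab.2.1, n1 + ab.1.2 + ab.2.2) * pderiv (j, ab.1.1, ab.1.2) (pderiv (i, ab.2.1, ab.2.2) (∑ c ∈ T0, q ^ (c.1 * n2) • (X (i, m2 + c.1, n2 + c.2) * pderiv (k, c.1, c.2) p)))))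
      = (∑ j : Idx l, ∑ a ∈ T1, ∑ c ∈ T0, q ^ (n1 * (m2 + c.1) + a.2 * m1 + a.2 * (m2 + c.1) + c.1 * n2) • (X (j, m1 + a.1 + (m2 + c.1), n1 + a.2 + (n2 + c.2)) * pderiv (j, a.1, a.2) (pderiv (k, c.1, c.2) p))) + ((∑ b ∈ T1, ∑ c ∈ T0, q ^ (n1 * b.1 + (n2 + c.2) * m1 + (n2 + c.2) * b.1 + c.1 * n2) • (X (i, m1 + (m2 + c.1) + b.1, n1 + (n2 + c.2) + b.2) * pderiv (i, b.1, b.2) (pderiv (k, c.1, c.2) p))) + (∑ j : Idx l, ∑ ab ∈ T1 ×ˢ T1, ∑ c ∈ T0, q ^ (n1 * ab.2.1 + ab.1.2 * m1 + ab.1.2 * ab.2.1 + c.1 * n2) • (X (j, m1 + ab.1.1 + ab.2.1, n1 + ab.1.2 + ab.2.2) * (X (i, m2 + c.1, n2 + c.2) * pderiv (j, ab.1.1, ab.1.2) (pderiv (i, ab.2.1, ab.2.2) (pderiv (k, c.1, c.2) p)))))) := by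
    have step1 : ∀ (j : Idx l), ∀ ab ∈ T1 ×ˢ T1, q ^ (n1 * ab.2.1 + ab.1.2 * m1 + ab.1.2 * ab.2.1) •
          (X (j, m1 + ab.1.1 + ab.2.1, n1 + ab.1.2 + ab.2.2) * pderiv (j, ab.1.1, ab.1.2) (pderiv (i, ab.2.1, ab.2.2) (∑ c ∈ T0, q ^ (c.1 * n2) • (X (i, m2 + c.1, n2 + c.2) * pderiv (k, c.1, c.2) p))))
        = (∑ c ∈ T0, if ab.2 = ((m2 + c.1, n2 + c.2) : ℤ × ℤ) then q ^ (n1 * ab.2.1 + ab.1.2 * m1 + ab.1.2 * ab.2.1 + c.1 * n2) • (X (j, m1 + ab.1.1 + ab.2.1, n1 + ab.1.2 + ab.2.2) * pderiv (j, ab.1.1, ab.1.2) (pderiv (k, c.1, c.2) p)) else 0) + ((∑ c ∈ T0, if j = i then (if ab.1 = ((m2 + c.1, n2 + c.2) : ℤ × ℤ) then q ^ (n1 * ab.2.1 + ab.1.2 * m1 + ab.1.2 * ab.2.1 + c.1 * n2) • (X (j, m1 + ab.1.1 + ab.2.1, n1 + ab.1.2 + ab.2.2) * pderiv (i, ab.2.1,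 ab.2.2) (pderiv (k, c.1, c.2) p)) else 0) else 0) + (∑ c ∈ T0, q ^ (n1 * ab.2.1 + ab.1.2 * m1 + ab.1.2 * ab.2.1 + c.1 * n2) • (X (j, m1 + ab.1.1 + ab.2.1, n1 + ab.1.2 + ab.2.2) * (X (i, m2 + c.1, n2 + c.2) * pderiv (j, ab.1.1, ab.1.2) (pderiv (i, ab.2.1, ab.2.2) (pderiv (k, c.1, c.2) p)))))) := by
      intro j ab _
      rw [hder j ab.1 ab.2]
      simp only [mul_add, smul_add, Finset.mul_sum, Finset.smul_sum, mul_ite0, smul_ite0,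
        mul_smul_comm, smul_smul, ← zpow_add₀ hq]
    rw [Finset.sum_congr rfl (fun j _ => Finset.sum_congr rfl (step1 j))]
    simp only [Finset.sum_add_distrib]
    congr 1
    · -- collapse over b = ab.2
      refine Finset.sum_congr rfl fun j _ => ?_
      rw [Finset.sum_product]
      refine Eq.trans (Finset.sum_congr rfl fun a _ => Finset.sum_comm) ?_
      refine Finset.sum_congr rfl fun a _ => Finset.sum_congr rfl fun c hc => ?_
      rw [Finset.sum_eq_single_of_mem ((m2 + c.1, n2 + c.2) : ℤ × ℤ) (hmem1 c hc)
        (fun b _ hb => if_neg hb), if_pos rfl]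
    congr 1
    · -- collapse over j = i and a = ab.1
      rw [Finset.sum_eq_single_of_mem i (Finset.mem_univ i) (fun j _ hj =>
        Finset.sum_eq_zero fun ab _ => Finset.sum_eq_zero fun c _ => if_neg hj)]
      refine Eq.trans (Finset.sum_congr rfl fun ab _ =>
        Finset.sum_congr rfl fun c _ => if_pos rfl) ?_
      rw [Finset.sum_product]
      rw [Finset.sum_comm]
      refine Finset.sum_congr rfl fun b _ => ?_
      rw [Finset.sum_comm]
      refine Finset.sum_congr rfl fun c hc => ?_
      rw [Finset.sum_eq_single_of_mem ((m2 + c.1, n2 + c.2) : ℤ × ℤ) (hmem1 c hc)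
        (fun a _ ha => if_neg ha), if_pos rfl]
  have hderU : ∀ c : ℤ × ℤ, pderiv ((k, c.1, c.2) : Idx l × ℤ × ℤ) (q ^ (-(m1 * n1)) • μ • pderiv (i, -m1, -n1) p - ∑ j : Idx l, ∑ ab ∈ T0 ×ˢ T0, q ^ (n1 * ab.2.1 + ab.1.2 * m1 + ab.1.2 * ab.2.1) • (X (j, m1 + ab.1.1 + ab.2.1, n1 + ab.1.2 + ab.2.2) * pderiv (j, ab.1.1, ab.1.2) (pderiv (i, ab.2.1, ab.2.2) p)))
      = q ^ (-(m1 * n1)) • μ • pderiv (k, c.1, c.2) (pderiv (i, -m1, -n1) p)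
        - ((∑ j : Idx l, ∑ ab ∈ T0 ×ˢ T0, if k = j then
              (if c = ((m1 + ab.1.1 + ab.2.1, n1 + ab.1.2 + ab.2.2) : ℤ × ℤ) then
                q ^ (n1 * ab.2.1 + ab.1.2 * m1 + ab.1.2 * ab.2.1) • pderiv (j, ab.1.1, ab.1.2) (pderiv (i, ab.2.1, ab.2.2) p) else 0)
              else 0)
          + ∑ j : Idx l, ∑ ab ∈ T0 ×ˢ T0, q ^ (n1 * ab.2.1 + ab.1.2 * m1 + ab.1.2 * ab.2.1) •
              (X (j, m1 + ab.1.1 + ab.2.1, n1 + ab.1.2 + ab.2.2) * pderiv (k, c.1, c.2)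
                (pderiv (j, ab.1.1, ab.1.2) (pderiv (i, ab.2.1, ab.2.2) p)))) := by
    intro c
    rw [map_sub, Derivation.map_smul, Derivation.map_smul, map_sum]
    congr 1
    rw [← Finset.sum_add_distrib]
    refine Finset.sum_congr rfl fun j _ => ?_
    rw [map_sum, ← Finset.sum_add_distrib]
    refine Finset.sum_congr rfl fun ab _ => ?_
    rw [Derivation.map_smul, pd_X_mul]
    have e3 : (if (((j, m1 + ab.1.1 + ab.2.1, n1 + ab.1.2 + ab.2.2) : Idx l × ℤ × ℤ)) = (k, c.1, c.2) then
        pderiv ((j, ab.1.1, ab.1.2) : Idx l × ℤ × ℤ) (pderiv (i, ab.2.1, ab.2.2) p) else 0)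
        = if k = j then (if c = ((m1 + ab.1.1 + ab.2.1, n1 + ab.1.2 + ab.2.2) : ℤ × ℤ) then
            pderiv ((j, ab.1.1, ab.1.2) : Idx l × ℤ × ℤ) (pderiv (i, ab.2.1, ab.2.2) p) else 0)
          else 0 :=
      ite_pair j k (m1 + ab.1.1 + ab.2.1, n1 + ab.1.2 + ab.2.2) c _
    rw [e3, smul_add, smul_ite0, smul_ite0]
  have hBAexp : (∑ c ∈ T2, q ^ (c.1 * n2) • (X (i, m2 + c.1, n2 + c.2) * pderiv (k, c.1, c.2) (q ^ (-(m1 * n1)) • μ • pderiv (i, -m1, -n1) p - ∑ j : Idx l, ∑ ab ∈ T0 ×ˢ T0, q ^ (n1 * ab.2.1 + ab.1.2 * m1 + ab.1.2 * ab.2.1) • (X (j, m1 + ab.1.1 + ab.2.1, n1 + ab.1.2 + ab.2.2) * pderiv (j, ab.1.1, ab.1.2) (pderiv (i, ab.2.1, ab.2.2) p)))))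
      = (∑ c ∈ T2, (q ^ (-(m1 * n1)) * μ * q ^ (c.1 * n2)) • (X (i, m2 + c.1, n2 + c.2) * pderiv (k, c.1, c.2) (pderiv (i, -m1, -n1) p))) - ((∑ c ∈ T2, ∑ j : Idx l, ∑ ab ∈ T0 ×ˢ T0, if k = j then (if c = ((m1 + ab.1.1 + ab.2.1, n1 + ab.1.2 + ab.2.2) : ℤ × ℤ) then q ^ (c.1 * n2 + (n1 * ab.2.1 + ab.1.2 * m1 + ab.1.2 * ab.2.1)) • (X (i, m2 + c.1, n2 + c.2) * pderiv (j, ab.1.1, ab.1.2) (pderiv (i, ab.2.1, ab.2.2) p)) else 0) else 0) + (∑ c ∈ T2, ∑ j : Idx l, ∑ ab ∈ T0 ×ˢ T0, q ^ (c.1 * n2 + (n1 * ab.2.1 + ab.1.2 * m1 + ab.1.2 * ab.2.1)) • (X (i, m2 + c.1, n2 + c.2) * (X (j, m1 + ab.1.1 + ab.2.1, n1 + ab.1.2 + ab.2.2) * pderiv (k, c.1, c.2) (pderiv (j, ab.1.1, ab.1.2) (pderiv (i, ab.2.1, ab.2.2) p)))))) := by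
    rw [← Finset.sum_add_distrib, ← Finset.sum_sub_distrib]
    refine Finset.sum_congr rfl fun c _ => ?_
    rw [hderU c, mul_sub, smul_sub]
    congr 1
    · rw [mul_smul_comm, mul_smul_comm, smul_smul, smul_smul]
      congr 1
      ring
    · rw [mul_add, smul_add]
      congr 1
      · simp only [Finset.mul_sum, Finset.smul_sum, mul_ite0, smul_ite0, mul_smul_comm,
          smul_smul, ← zpow_add₀ hq]
      · simp only [Finset.mul_sum, Finset.smul_sum, mul_smul_comm, smul_smul, ← zpow_add₀ hq]
  have hBAmu : (∑ c ∈ T2, (q ^ (-(m1 * n1)) * μ * q ^ (c.1 * n2)) • (X (i, m2 + c.1, n2 + c.2) * pderiv (k, c.1, c.2) (pderiv (i, -m1, -n1) p))) = ∑ c ∈ T0, (q ^ (-(m1 * n1)) * μ * q ^ (c.1 * n2)) • (X (i, m2 + c.1, n2 + c.2) * pderiv (i, -m1, -n1) (pderiv (k, c.1, c.2) p)) := by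
    refine Eq.trans (Finset.sum_subset hT02 fun c _ hc => by
      rw [pderiv_comm', hz c hc k, map_zero, mul_zero, smul_zero]).symm ?_
    exact Finset.sum_congr rfl fun c _ => by rw [pderiv_comm']
  have hBA2 : (∑ c ∈ T2, ∑ j : Idx l, ∑ ab ∈ T0 ×ˢ T0, if k = j then (if c = ((m1 + ab.1.1 + ab.2.1, n1 + ab.1.2 + ab.2.2) : ℤ × ℤ) then q ^ (c.1 * n2 + (n1 * ab.2.1 + ab.1.2 * m1 + ab.1.2 * ab.2.1)) • (X (i, m2 + c.1, n2 + c.2) * pderiv (j, ab.1.1, ab.1.2) (pderiv (i, ab.2.1, ab.2.2) p)) else 0) else 0) = ∑ b ∈ T1, ∑ c ∈ T0, q ^ (n1 * b.1 + (n2 + c.2) * m1 + (n2 + c.2) * b.1 + c.1 * n2) • (X (i, m1 + (m2 + c.1) + b.1, n1 + (n2 + c.2) + b.2) * pderiv (i, b.1, b.2) (pderiv (k, c.1, c.2) p)) := by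
    rw [Finset.sum_comm]
    rw [Finset.sum_eq_single_of_mem k (Finset.mem_univ k) (fun j _ hj =>
      Finset.sum_eq_zero fun c _ => Finset.sum_eq_zero fun ab _ => if_neg fun h => hj h.symm)]
    refine Eq.trans (Finset.sum_congr rfl fun c _ =>
      Finset.sum_congr rfl fun ab _ => if_pos rfl) ?_
    rw [Finset.sum_comm]
    refine Eq.trans (Finset.sum_congr rfl fun ab hab =>
      Finset.sum_eq_single_of_mem ((m1 + ab.1.1 + ab.2.1, n1 + ab.1.2 + ab.2.2) : ℤ × ℤ)
        (hmem2 ab.1 ab.2 (hT01 (Finset.mem_product.1 hab).1) (hT01 (Finset.mem_product.1 hab).2))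
        (fun c _ hc => if_neg hc)) ?_
    refine Eq.trans (Finset.sum_congr rfl fun ab _ => if_pos rfl) ?_
    rw [Finset.sum_product]
    rw [Finset.sum_comm]
    refine Eq.trans (Finset.sum_subset hT01 fun b _ hb => Finset.sum_eq_zero fun a _ => by
      rw [hz b hb i, map_zero, mul_zero, smul_zero]) ?_
    refine Finset.sum_congr rfl fun b _ => Finset.sum_congr rfl fun a _ => ?_
    rw [pderiv_comm']
    congr 1
    · congr 1
      ring
    · congr 2
      rw [Prod.mk.injEq, Prod.mk.injEq]
      exact ⟨rfl, by ring, by ring⟩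
  have hBA3 : (∑ c ∈ T2, ∑ j : Idx l, ∑ ab ∈ T0 ×ˢ T0, q ^ (c.1 * n2 + (n1 * ab.2.1 + ab.1.2 * m1 + ab.1.2 * ab.2.1)) • (X (i, m2 + c.1, n2 + c.2) * (X (j, m1 + ab.1.1 + ab.2.1, n1 + ab.1.2 + ab.2.2) * pderiv (k, c.1, c.2) (pderiv (j, ab.1.1, ab.1.2) (pderiv (i, ab.2.1, ab.2.2) p))))) = ∑ j : Idx l, ∑ ab ∈ T1 ×ˢ T1, ∑ c ∈ T0, q ^ (n1 * ab.2.1 + ab.1.2 * m1 + ab.1.2 * ab.2.1 + c.1 * n2) • (X (j, m1 + ab.1.1 + ab.2.1, n1 + ab.1.2 + ab.2.2) * (X (i, m2 + c.1, n2 + c.2) * pderiv (j, ab.1.1, ab.1.2) (pderiv (i, ab.2.1, ab.2.2) (pderiv (k, c.1, c.2) p)))) := by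
    rw [Finset.sum_comm]
    refine Eq.trans (Finset.sum_congr rfl fun j _ => Finset.sum_comm) ?_
    refine Eq.trans (Finset.sum_congr rfl fun j _ =>
      Finset.sum_subset (Finset.product_subset_product hT01 hT01) fun ab _ hab =>
        Finset.sum_eq_zero fun c _ => ?_) ?_
    · by_cases hb : ab.2 ∈ T0
      · have ha : ab.1 ∉ T0 := fun h => hab (Finset.mem_product.2 ⟨h, hb⟩)
        rw [pderiv_comm' ((j, ab.1.1, ab.1.2) : Idx l × ℤ × ℤ)
            ((i, ab.2.1, ab.2.2) : Idx l × ℤ × ℤ) p, hz ab.1 ha j, map_zero, map_zero,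
          mul_zero, mul_zero, smul_zero]
      · rw [hz ab.2 hb i, map_zero, map_zero, mul_zero, mul_zero, smul_zero]
    refine Eq.trans (Finset.sum_congr rfl fun j _ => Finset.sum_congr rfl fun ab _ =>
      (Finset.sum_subset hT02 fun c _ hc => by
        rw [pderiv_comm' ((k, c.1, c.2) : Idx l × ℤ × ℤ) ((j, ab.1.1, ab.1.2) : Idx l × ℤ × ℤ),
          pderiv_comm' ((k, c.1, c.2) : Idx l × ℤ × ℤ) ((i, ab.2.1, ab.2.2) : Idx l × ℤ × ℤ),
          hz c hc k, map_zero, map_zero, mul_zero, mul_zero, smul_zero]).symm) ?_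
    refine Finset.sum_congr rfl fun j _ => Finset.sum_congr rfl fun ab _ =>
      Finset.sum_congr rfl fun c _ => ?_
    rw [pderiv_comm' ((k, c.1, c.2) : Idx l × ℤ × ℤ) ((j, ab.1.1, ab.1.2) : Idx l × ℤ × ℤ),
      pderiv_comm' ((k, c.1, c.2) : Idx l × ℤ × ℤ) ((i, ab.2.1, ab.2.2) : Idx l × ℤ × ℤ),
      mul_left_comm,
      show c.1 * n2 + (n1 * ab.2.1 + ab.1.2 * m1 + ab.1.2 * ab.2.1)
          = n1 * ab.2.1 + ab.1.2 * m1 + ab.1.2 * ab.2.1 + c.1 * n2 from by ring]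
  have hR : q ^ (n1 * m2) • eUp l q μ k (m1 + m2) (n1 + n2) p
      = ((q ^ (-(m1 * n1) + (-m1 - m2) * n2) * μ) • pderiv (k, -m1 - m2, -n1 - n2) p) - (∑ j : Idx l, ∑ a ∈ T1, ∑ c ∈ T0, q ^ (n1 * (m2 + c.1) + a.2 * m1 + a.2 * (m2 + c.1) + c.1 * n2) • (X (j, m1 + a.1 + (m2 + c.1), n1 + a.2 + (n2 + c.2)) * pderiv (j, a.1, a.2) (pderiv (k, c.1, c.2) p))) := by
    rw [eUp_eq l q μ k (m1 + m2) (n1 + n2) p T1 T0 hz1 hz, smul_sub]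
    congr 1
    · have hv : ((k, -(m1 + m2), -(n1 + n2)) : Idx l × ℤ × ℤ) = (k, -m1 - m2, -n1 - n2) := by
        rw [Prod.mk.injEq, Prod.mk.injEq]
        exact ⟨rfl, by ring, by ring⟩
      rw [hv, smul_smul, smul_smul, ← zpow_add₀ hq,
        show n1 * m2 + -((m1 + m2) * (n1 + n2)) = -(m1 * n1) + (-m1 - m2) * n2 from by ring]
    · rw [Finset.smul_sum]
      refine Finset.sum_congr rfl fun j _ => ?_
      rw [Finset.smul_sum, Finset.sum_product]
      refine Finset.sum_congr rfl fun a _ => Finset.sum_congr rfl fun c _ => ?_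
      rw [smul_smul, ← zpow_add₀ hq,
        show n1 * m2 + ((n1 + n2) * c.1 + a.2 * (m1 + m2) + a.2 * c.1)
          = n1 * (m2 + c.1) + a.2 * m1 + a.2 * (m2 + c.1) + c.1 * n2 from by ring,
        show m1 + m2 + a.1 + c.1 = m1 + a.1 + (m2 + c.1) from by ring,
        show n1 + n2 + a.2 + c.2 = n1 + a.2 + (n2 + c.2) from by ring]
  simp only [oComm]
  rw [hB, hU, hAB, hBA, hMA, hSA, hBAexp, hBAmu, hBA2, hBA3, hR]
  abel
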